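/- Let D be a category with all pullbacks, let C be a full subcategory of D that is closed under isomorphism (equal to its essential image) and has the property that for every object A in C, if Hom(B, A) is nonempty then B is in C. Let D' be the full subcategory of D consisting of all objects not in C. Then the Grothendieck twist Tw(D') has all pullbacks. -/

import Mathlib

open CategoryTheory CategoryTheory.Limits

universe v u

/-- An object of the Grothendieck twist `Tw(D)`: a finite index type together with a
family of objects of `D`. -/
structure TwObj (D : Type u) [Category.{v} D] : Type (max u 1) where
  ι : Type
  [fin : Finite ι]
  obj : ι → D

attribute [instance] TwObj.fin

/-- A morphism of the Grothendieck twist `Tw(D)`: a function of index types together with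
componentwise morphisms of `D`. -/
structure TwHom {D : Type u} [Category.{v} D] (X Y : TwObj D) : Type (max v 1) where
  toFun : X.ι → Y.ι
  map : ∀ i, X.obj i ⟶ Y.obj (toFun i)

theorem TwHom.hext {D : Type u} [Category.{v} D] {X Y : TwObj D} {f g : TwHom X Y}
    (h1 : f.toFun = g.toFun) (h2 : HEq f.map g.map) : f = g := by
  cases f; cases g; cases h1; cases h2; rfl

instance (D : Type u) [Category.{v} D] : Category (TwObj D) where
  Hom X Y := TwHom X Y
  id X := ⟨id, fun i => 𝟙 _⟩
  comp f g := ⟨g.toFun ∘ f.toFun, fun i => f.map i ≫ g.map (f.toFun i)⟩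
  id_comp f := TwHom.hext rfl (heq_of_eq (funext fun i => Category.id_comp _))
  comp_id f := TwHom.hext rfl (heq_of_eq (funext fun i => Category.comp_id _))
  assoc f g h := TwHom.hext rfl (heq_of_eq (funext fun i => Category.assoc _ _ _))

namespace TwPb

variable {D : Type u} [Category.{v} D]

lemma TwHom.ext' {X Y : TwObj D} {f g : TwHom X Y}
    (h1 : f.toFun = g.toFun)
    (h2 : ∀ i, f.map i ≫ eqToHom (congrArg Y.obj (congrFun h1 i)) = g.map i) : f = g := by
  obtain ⟨ft, fm⟩ := f; obtain ⟨gt, gm⟩ := g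
  dsimp at h1; subst h1
  simp only [eqToHom_refl, Category.comp_id] at h2
  exact congrArg _ (funext h2)

lemma TwHom.map_eq {X Y : TwObj D} {f g : TwHom X Y}
    (h : f = g) (i : X.ι) :
    f.map i ≫ eqToHom (congrArg Y.obj (congrFun (congrArg TwHom.toFun h) i)) = g.map i := by
  subst h; simp

lemma fs_eqToHom {P : D → Prop} {A B : ObjectProperty.FullSubcategory P} (e : A = B) :
    (eqToHom e : A ⟶ B).hom = eqToHom (congrArg ObjectProperty.FullSubcategory.obj e) := by
  cases e; rfl

lemma fs_comp_eqToHom {Q : D → Prop} {A B B' : ObjectProperty.FullSubcategory Q} (u : A ⟶ B) (e : B = B') :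
    (u ≫ eqToHom e : A ⟶ B').hom =
      ((u.hom ≫ eqToHom (congrArg ObjectProperty.FullSubcategory.obj e) : A.obj ⟶ B'.obj)) := by
  cases e; rfl

lemma TwHom.map_eq'' {X Y : TwObj D} {f g : TwHom X Y} (h : f = g) (i : X.ι)
    (e : Y.obj (f.toFun i) = Y.obj (g.toFun i)) :
    f.map i ≫ eqToHom e = g.map i := by
  cases h
  rw [show e = rfl from rfl]
  simp

lemma pb_cond [HasPullbacks D] {A B E E' : D} (u : A ⟶ E) (w : B ⟶ E') (e : E' = E)
    (e' : E = E') :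
    (pullback.fst u (w ≫ eqToHom e) ≫ u) ≫ eqToHom e' =
      pullback.snd u (w ≫ eqToHom e) ≫ w := by
  rw [pullback.condition]; simp

variable [HasPullbacks D] (C : Set D)
variable {X Y Z : TwObj (ObjectProperty.FullSubcategory (fun A : D => A ∉ C))} (f : X ⟶ Z) (g : Y ⟶ Z)

/-- the `D`-level pullback at a pair of matching indices -/
noncomputable def pbObj (i : X.ι) (j : Y.ι) (h : f.toFun i = g.toFun j) : D :=
  Limits.pullback
    ((f.map i).hom : (X.obj i).obj ⟶ (Z.obj (f.toFun i)).obj)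
    (((g.map j).hom : (Y.obj j).obj ⟶ (Z.obj (g.toFun j)).obj) ≫
      eqToHom (show (Z.obj (g.toFun j)).obj = (Z.obj (f.toFun i)).obj by rw [h]))

def Idx : Type :=
  {p : X.ι × Y.ι // ∃ h : f.toFun p.1 = g.toFun p.2, pbObj C f g p.1 p.2 h ∉ C}

instance : Finite (Idx C f g) := Subtype.finite

noncomputable def P : TwObj (ObjectProperty.FullSubcategory (fun A : D => A ∉ C)) :=
  ⟨Idx C f g, fun p => ⟨pbObj C f g p.1.1 p.1.2 p.2.choose, p.2.choose_spec⟩⟩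

noncomputable def fstHom : P C f g ⟶ X :=
  ⟨fun p => p.1.1, fun p => ObjectProperty.homMk (pullback.fst _ _)⟩

noncomputable def sndHom : P C f g ⟶ Y :=
  ⟨fun p => p.1.2, fun p => ObjectProperty.homMk (pullback.snd _ _)⟩

lemma weq : fstHom C f g ≫ f = sndHom C f g ≫ g := by
  refine TwHom.ext' ?_ ?_
  · exact funext fun p => p.2.choose
  intro p
  apply InducedCategory.hom_ext
  rw [ObjectProperty.FullSubcategory.comp_hom, fs_eqToHom]
  exact pb_cond _ _ _ _

variable (s : PullbackCone f g)

lemma s_h (l : s.pt.ι) : f.toFun (s.fst.toFun l) = g.toFun (s.snd.toFun l) :=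
  congrFun (congrArg TwHom.toFun s.condition) l

noncomputable def med (l : s.pt.ι) :
    (s.pt.obj l).obj ⟶ pbObj C f g (s.fst.toFun l) (s.snd.toFun l) (s_h C f g s l) :=
  pullback.lift (s.fst.map l).hom (s.snd.map l).hom (by
    have h := congrArg InducedCategory.Hom.hom (TwHom.map_eq s.condition l)
    rw [fs_comp_eqToHom, comp_eqToHom_iff] at h
    exact h.trans (Category.assoc _ _ _))

lemma med_fst (l : s.pt.ι) : med C f g s l ≫ pullback.fst _ _ = (s.fst.map l).hom :=
  pullback.lift_fst _ _ _

lemma med_snd (l : s.pt.ι) : med C f g s l ≫ pullback.snd _ _ = (s.snd.map l).hom :=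
  pullback.lift_snd _ _ _

lemma med_not_mem (hC_src : ∀ A ∈ C, ∀ B : D, Nonempty (B ⟶ A) → B ∈ C) (l : s.pt.ι) :
    pbObj C f g (s.fst.toFun l) (s.snd.toFun l) (s_h C f g s l) ∉ C := fun hmem =>
  (s.pt.obj l).property (hC_src _ hmem _ ⟨med C f g s l⟩)

noncomputable def liftHom (hC_src : ∀ A ∈ C, ∀ B : D, Nonempty (B ⟶ A) → B ∈ C) :
    s.pt ⟶ P C f g :=
  ⟨fun l => ⟨(s.fst.toFun l, s.snd.toFun l), s_h C f g s l, med_not_mem C f g s hC_src l⟩,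
   fun l => ObjectProperty.homMk (med C f g s l)⟩

lemma fac_left (hC_src : ∀ A ∈ C, ∀ B : D, Nonempty (B ⟶ A) → B ∈ C) :
    liftHom C f g s hC_src ≫ fstHom C f g = s.fst := by
  refine TwHom.ext' rfl fun l => ?_
  apply InducedCategory.hom_ext
  refine Eq.trans ?_ (med_fst C f g s l)
  exact Category.comp_id _

lemma fac_right (hC_src : ∀ A ∈ C, ∀ B : D, Nonempty (B ⟶ A) → B ∈ C) :
    liftHom C f g s hC_src ≫ sndHom C f g = s.snd := by
  refine TwHom.ext' rfl fun l => ?_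
  apply InducedCategory.hom_ext
  refine Eq.trans ?_ (med_snd C f g s l)
  exact Category.comp_id _

lemma uniq (hC_src : ∀ A ∈ C, ∀ B : D, Nonempty (B ⟶ A) → B ∈ C)
    (m : s.pt ⟶ P C f g) (hm1 : m ≫ fstHom C f g = s.fst) (hm2 : m ≫ sndHom C f g = s.snd) :
    m = liftHom C f g s hC_src := by
  obtain ⟨mt, mm⟩ := m
  have h1 : mt = (liftHom C f g s hC_src).toFun := by
    funext l
    refine Subtype.ext (Prod.ext ?_ ?_)
    · exact congrFun (congrArg TwHom.toFun hm1) l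
    · exact congrFun (congrArg TwHom.toFun hm2) l
  subst h1
  refine TwHom.ext' rfl fun l => ?_
  simp only [eqToHom_refl, Category.comp_id]
  apply InducedCategory.hom_ext
  apply pullback.hom_ext
  · refine Eq.trans ?_ (med_fst C f g s l).symm
    refine Eq.trans ?_ (congrArg InducedCategory.Hom.hom (TwHom.map_eq'' hm1 l rfl))
    exact (Category.comp_id _).symm
  · refine Eq.trans ?_ (med_snd C f g s l).symm
    refine Eq.trans ?_ (congrArg InducedCategory.Hom.hom (TwHom.map_eq'' hm2 l rfl))
    exact (Category.comp_id _).symm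

end TwPb

/-- Let `D` have all pullbacks, and let `C` be a class of objects of `D`, closed under
isomorphism, such that any object admitting a morphism into an object of `C` is itself in
`C`.  Then the Grothendieck twist of the full subcategory `D'` of objects not in `C` has
all pullbacks. -/
theorem tw_remove_sources_hasPullbacks (D : Type u) [Category.{v} D] [HasPullbacks D]
    (C : Set D)
    (hC_iso : ∀ A ∈ C, ∀ B : D, Nonempty (B ≅ A) → B ∈ C)
    (hC_src : ∀ A ∈ C, ∀ B : D, Nonempty (B ⟶ A) → B ∈ C) :
    HasPullbacks (TwObj (ObjectProperty.FullSubcategory (fun X : D => X ∉ C))) := by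
  haveI : ∀ {X Y Z : TwObj (ObjectProperty.FullSubcategory (fun X : D => X ∉ C))} {f : X ⟶ Z} {g : Y ⟶ Z},
      HasLimit (cospan f g) := by
    intro X Y Z f g
    refine HasLimit.mk ⟨PullbackCone.mk (TwPb.fstHom C f g) (TwPb.sndHom C f g) (TwPb.weq C f g), ?_⟩
    exact PullbackCone.IsLimit.mk _ (fun s => TwPb.liftHom C f g s hC_src)
      (fun s => TwPb.fac_left C f g s hC_src) (fun s => TwPb.fac_right C f g s hC_src)
      (fun s m h1 h2 => TwPb.uniq C f g s hC_src m h1 h2)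
  exact hasPullbacks_of_hasLimit_cospan _
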